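/- Invariance under cycle-bisimulation: let K_1 and K_2 be Kripke structures and B a cycle-bisimulation between them. Then for every pair (w_1, w_2) ∈ B and every Cycle-CTL* state formula φ, K_1, w_1 ⊨ φ if and only if K_2, w_2 ⊨ φ. In particular, K_1 ⊨ φ iff K_2 ⊨ φ for every Cycle-CTL* state formula φ. -/
import Mathlib


namespace CycleCTL

universe u v

/-- A Kripke structure over a set `AP` of atomic propositions. -/
structure Kripke (AP : Type) : Type (u + 1) where
  World : Type u
  init : World
  R : World → World → Prop
  label : World → Set AP
  serial : ∀ w, ∃ v, R w v

variable {AP : Type}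

/-- An (infinite) path of a Kripke structure. -/
def IsPath (K : Kripke.{u} AP) (π : ℕ → K.World) : Prop :=
  ∀ i, K.R (π i) (π (i + 1))

/-- A cycle: a path visiting its first world infinitely often. -/
def IsCycle (K : Kripke.{u} AP) (π : ℕ → K.World) : Prop :=
  IsPath K π ∧ ∀ i, ∃ j, i < j ∧ π j = π 0

mutual
  /-- State formulas of Cycle-CTL*. -/
  inductive StateForm (AP : Type) : Type where
    | atom : AP → StateForm AP
    | not  : StateForm AP → StateForm AP
    | and  : StateForm AP → StateForm AP → StateForm AP
    | or   : StateForm AP → StateForm AP → StateForm AP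
    | E    : PathForm AP → StateForm AP
    | A    : PathForm AP → StateForm AP
    | Ec   : PathForm AP → StateForm AP
    | Ac   : PathForm AP → StateForm AP
  /-- Path formulas of Cycle-CTL*. -/
  inductive PathForm (AP : Type) : Type where
    | state : StateForm AP → PathForm AP
    | not   : PathForm AP → PathForm AP
    | and   : PathForm AP → PathForm AP → PathForm AP
    | or    : PathForm AP → PathForm AP → PathForm AP
    | next  : PathForm AP → PathForm AP
    | untl  : PathForm AP → PathForm AP → PathForm AP
end

mutual
  /-- Satisfaction of a state formula at a world. -/
  def SatS (K : Kripke.{u} AP) : K.World → StateForm AP → Prop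
    | w, .atom p => p ∈ K.label w
    | w, .not φ => ¬ SatS K w φ
    | w, .and φ₁ φ₂ => SatS K w φ₁ ∧ SatS K w φ₂
    | w, .or φ₁ φ₂ => SatS K w φ₁ ∨ SatS K w φ₂
    | w, .E ψ => ∃ π, IsPath K π ∧ π 0 = w ∧ SatP K π 0 ψ
    | w, .A ψ => ∀ π, IsPath K π → π 0 = w → SatP K π 0 ψ
    | w, .Ec ψ => ∃ π, IsCycle K π ∧ π 0 = w ∧ SatP K π 0 ψ
    | w, .Ac ψ => ∀ π, IsCycle K π → π 0 = w → SatP K π 0 ψ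
  /-- Satisfaction of a path formula on a path at a position. -/
  def SatP (K : Kripke.{u} AP) : (ℕ → K.World) → ℕ → PathForm AP → Prop
    | π, i, .state φ => SatS K (π i) φ
    | π, i, .not ψ => ¬ SatP K π i ψ
    | π, i, .and ψ₁ ψ₂ => SatP K π i ψ₁ ∧ SatP K π i ψ₂
    | π, i, .or ψ₁ ψ₂ => SatP K π i ψ₁ ∨ SatP K π i ψ₂
    | π, i, .next ψ => SatP K π (i + 1) ψ
    | π, i, .untl ψ₁ ψ₂ => ∃ k, SatP K π (i + k) ψ₂ ∧ ∀ j < k, SatP K π (i + j) ψ₁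
end

/-- `K ⊨ φ` : satisfaction at the initial world. -/
def Sat (K : Kripke.{u} AP) (φ : StateForm AP) : Prop := SatS K K.init φ

/-- `⊤` as a path formula, abbreviating `p ∨ ¬p`. -/
def topP (p : AP) : PathForm AP := .or (.state (.atom p)) (.not (.state (.atom p)))

/-- `F ψ` abbreviates `⊤ U ψ`. -/
def FP (p : AP) (ψ : PathForm AP) : PathForm AP := .untl (topP p) ψ

/-- `G ψ` abbreviates `¬(⊤ U ¬ψ)`. -/
def GP (p : AP) (ψ : PathForm AP) : PathForm AP := .not (FP p (.not ψ))


/-- A cycle-bisimulation between two Kripke structures. -/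
def IsCycleBisim (K₁ : Kripke.{u} AP) (K₂ : Kripke.{v} AP)
    (B : K₁.World → K₂.World → Prop) : Prop :=
  B K₁.init K₂.init ∧
  ∀ w₁ w₂, B w₁ w₂ →
    (K₁.label w₁ = K₂.label w₂) ∧
    (∀ v₁, K₁.R w₁ v₁ → ∃ v₂, K₂.R w₂ v₂ ∧ B v₁ v₂) ∧
    (∀ v₂, K₂.R w₂ v₂ → ∃ v₁, K₁.R w₁ v₁ ∧ B v₁ v₂) ∧
    (∀ π₁, IsCycle K₁ π₁ → π₁ 0 = w₁ →
      ∃ π₂, IsCycle K₂ π₂ ∧ π₂ 0 = w₂ ∧ ∀ i, B (π₁ i) (π₂ i)) ∧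
    (∀ π₂, IsCycle K₂ π₂ → π₂ 0 = w₂ →
      ∃ π₁, IsCycle K₁ π₁ ∧ π₁ 0 = w₁ ∧ ∀ i, B (π₁ i) (π₂ i))

section Aux
variable {AP : Type} {K₁ : Kripke.{u} AP} {K₂ : Kripke.{v} AP}
  {B : K₁.World → K₂.World → Prop}

theorem pathLift₁ (hB : IsCycleBisim K₁ K₂ B)
    {w₁ w₂} (hw : B w₁ w₂) {π₁} (hπ : IsPath K₁ π₁) (h0 : π₁ 0 = w₁) :
    ∃ π₂, IsPath K₂ π₂ ∧ π₂ 0 = w₂ ∧ ∀ i, B (π₁ i) (π₂ i) := by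
  have forth : ∀ a b, B a b → ∀ v₁, K₁.R a v₁ → ∃ v₂, K₂.R b v₂ ∧ B v₁ v₂ :=
    fun a b h => (hB.2 a b h).2.1
  have hw0 : B (π₁ 0) w₂ := h0 ▸ hw
  let g : ∀ n, {v : K₂.World // B (π₁ n) v} := fun n =>
    Nat.rec ⟨w₂, hw0⟩ (fun n p => ⟨Classical.choose (forth _ _ p.2 _ (hπ n)),
      (Classical.choose_spec (forth _ _ p.2 _ (hπ n))).2⟩) n
  refine ⟨fun n => (g n).1, fun n => ?_, rfl, fun n => (g n).2⟩
  exact (Classical.choose_spec (forth _ _ (g n).2 _ (hπ n))).1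

theorem pathLift₂ (hB : IsCycleBisim K₁ K₂ B)
    {w₁ w₂} (hw : B w₁ w₂) {π₂} (hπ : IsPath K₂ π₂) (h0 : π₂ 0 = w₂) :
    ∃ π₁, IsPath K₁ π₁ ∧ π₁ 0 = w₁ ∧ ∀ i, B (π₁ i) (π₂ i) := by
  have back : ∀ a b, B a b → ∀ v₂, K₂.R b v₂ → ∃ v₁, K₁.R a v₁ ∧ B v₁ v₂ :=
    fun a b h => (hB.2 a b h).2.2.1
  have hw0 : B w₁ (π₂ 0) := h0 ▸ hw
  let g : ∀ n, {v : K₁.World // B v (π₂ n)} := fun n =>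
    Nat.rec ⟨w₁, hw0⟩ (fun n p => ⟨Classical.choose (back _ _ p.2 _ (hπ n)),
      (Classical.choose_spec (back _ _ p.2 _ (hπ n))).2⟩) n
  refine ⟨fun n => (g n).1, fun n => ?_, rfl, fun n => (g n).2⟩
  exact (Classical.choose_spec (back _ _ (g n).2 _ (hπ n))).1

mutual
theorem satS_iff (hB : IsCycleBisim K₁ K₂ B) (φ : StateForm AP) :
    ∀ w₁ w₂, B w₁ w₂ → (SatS K₁ w₁ φ ↔ SatS K₂ w₂ φ) := by
  cases φ with
  | atom p => intro w₁ w₂ hw; simp only [SatS, (hB.2 w₁ w₂ hw).1]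
  | not φ => intro w₁ w₂ hw; simp only [SatS]; exact not_congr (satS_iff hB φ w₁ w₂ hw)
  | and φ₁ φ₂ =>
      intro w₁ w₂ hw; simp only [SatS]
      exact and_congr (satS_iff hB φ₁ w₁ w₂ hw) (satS_iff hB φ₂ w₁ w₂ hw)
  | or φ₁ φ₂ =>
      intro w₁ w₂ hw; simp only [SatS]
      exact or_congr (satS_iff hB φ₁ w₁ w₂ hw) (satS_iff hB φ₂ w₁ w₂ hw)
  | E ψ =>
      intro w₁ w₂ hw
      simp only [SatS]
      constructor
      · rintro ⟨π₁, hπ, h0, hs⟩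
        obtain ⟨π₂, hπ₂, h02, hrel⟩ := pathLift₁ hB hw hπ h0
        exact ⟨π₂, hπ₂, h02, (satP_iff hB ψ π₁ π₂ hrel 0).1 hs⟩
      · rintro ⟨π₂, hπ, h0, hs⟩
        obtain ⟨π₁, hπ₁, h01, hrel⟩ := pathLift₂ hB hw hπ h0
        exact ⟨π₁, hπ₁, h01, (satP_iff hB ψ π₁ π₂ hrel 0).2 hs⟩
  | A ψ =>
      intro w₁ w₂ hw
      simp only [SatS]
      constructor
      · intro h π₂ hπ h0
        obtain ⟨π₁, hπ₁, h01, hrel⟩ := pathLift₂ hB hw hπ h0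
        exact (satP_iff hB ψ π₁ π₂ hrel 0).1 (h π₁ hπ₁ h01)
      · intro h π₁ hπ h0
        obtain ⟨π₂, hπ₂, h02, hrel⟩ := pathLift₁ hB hw hπ h0
        exact (satP_iff hB ψ π₁ π₂ hrel 0).2 (h π₂ hπ₂ h02)
  | Ec ψ =>
      intro w₁ w₂ hw
      simp only [SatS]
      constructor
      · rintro ⟨π₁, hπ, h0, hs⟩
        obtain ⟨π₂, hπ₂, h02, hrel⟩ := (hB.2 w₁ w₂ hw).2.2.2.1 π₁ hπ h0
        exact ⟨π₂, hπ₂, h02, (satP_iff hB ψ π₁ π₂ hrel 0).1 hs⟩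
      · rintro ⟨π₂, hπ, h0, hs⟩
        obtain ⟨π₁, hπ₁, h01, hrel⟩ := (hB.2 w₁ w₂ hw).2.2.2.2 π₂ hπ h0
        exact ⟨π₁, hπ₁, h01, (satP_iff hB ψ π₁ π₂ hrel 0).2 hs⟩
  | Ac ψ =>
      intro w₁ w₂ hw
      simp only [SatS]
      constructor
      · intro h π₂ hπ h0
        obtain ⟨π₁, hπ₁, h01, hrel⟩ := (hB.2 w₁ w₂ hw).2.2.2.2 π₂ hπ h0
        exact (satP_iff hB ψ π₁ π₂ hrel 0).1 (h π₁ hπ₁ h01)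
      · intro h π₁ hπ h0
        obtain ⟨π₂, hπ₂, h02, hrel⟩ := (hB.2 w₁ w₂ hw).2.2.2.1 π₁ hπ h0
        exact (satP_iff hB ψ π₁ π₂ hrel 0).2 (h π₂ hπ₂ h02)

theorem satP_iff (hB : IsCycleBisim K₁ K₂ B) (ψ : PathForm AP) :
    ∀ π₁ π₂, (∀ i, B (π₁ i) (π₂ i)) → ∀ i, (SatP K₁ π₁ i ψ ↔ SatP K₂ π₂ i ψ) := by
  cases ψ with
  | state φ => intro π₁ π₂ hrel i; simp only [SatP]; exact satS_iff hB φ _ _ (hrel i)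
  | not ψ => intro π₁ π₂ hrel i; simp only [SatP]; exact not_congr (satP_iff hB ψ π₁ π₂ hrel i)
  | and ψ₁ ψ₂ =>
      intro π₁ π₂ hrel i; simp only [SatP]
      exact and_congr (satP_iff hB ψ₁ π₁ π₂ hrel i) (satP_iff hB ψ₂ π₁ π₂ hrel i)
  | or ψ₁ ψ₂ =>
      intro π₁ π₂ hrel i; simp only [SatP]
      exact or_congr (satP_iff hB ψ₁ π₁ π₂ hrel i) (satP_iff hB ψ₂ π₁ π₂ hrel i)
  | next ψ => intro π₁ π₂ hrel i; simp only [SatP]; exact satP_iff hB ψ π₁ π₂ hrel (i + 1)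
  | untl ψ₁ ψ₂ =>
      intro π₁ π₂ hrel i
      simp only [SatP]
      exact exists_congr fun k => and_congr (satP_iff hB ψ₂ π₁ π₂ hrel (i + k))
        (forall_congr' fun j => imp_congr Iff.rfl (satP_iff hB ψ₁ π₁ π₂ hrel (i + j)))
end
end Aux

/-- Cycle-CTL* is invariant under cycle-bisimulation: cycle-bisimilar pairs of
worlds satisfy the same state formulas; in particular, the two structures satisfy the same
state formulas. -/
theorem stmt6 {AP : Type} (K₁ : Kripke.{u} AP) (K₂ : Kripke.{v} AP)
    (B : K₁.World → K₂.World → Prop) (hB : IsCycleBisim K₁ K₂ B) :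
    (∀ w₁ w₂, B w₁ w₂ → ∀ φ : StateForm AP, (SatS K₁ w₁ φ ↔ SatS K₂ w₂ φ)) ∧
    (∀ φ : StateForm AP, Sat K₁ φ ↔ Sat K₂ φ) := by
  refine ⟨fun w₁ w₂ hw φ => satS_iff hB φ w₁ w₂ hw, fun φ => satS_iff hB φ _ _ hB.1⟩

end CycleCTL
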